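/- For each pair of nonnegative integers i, m there exists a constant A_{i,m} such that 2F~_i^m(x,y) ≡ A_{i,m}·(x+2m+i)_{3m+2i+1}·(x+m−1/2)_m ≡ −A_{i,m}·(y+2m+i)_{3m+2i+1}·(y+m−1/2)_m modulo the ideal generated by (x+y+m) in the polynomial ring. -/

import Mathlib

open MvPolynomial

/-- Falling factorial `(a)_k = a(a-1)⋯(a-k+1)`. -/
noncomputable def ff {R : Type*} [CommRing R] (a : R) (k : ℕ) : R :=
  ∏ j ∈ Finset.range k, (a - (j : R))

/-- `F2 i m = 2·F̃ᵢᵐ(x,y)` as a polynomial in `ℚ[x,y]`, with `x = X 0`, `y = X 1`. -/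
noncomputable def F2 (i m : ℕ) : MvPolynomial (Fin 2) ℚ :=
  ∑ u ∈ Finset.range (m+1),
    C ((m.choose u : ℚ) * (-1)^u * (m.factorial : ℚ) / ff ((m:ℚ) + i + u + 1/2) (m+1))
      * ff (X 0 + C ((m:ℚ) + i + u)) (2*m+2*i+2*u+1)
      * ff (X 1 + C ((m:ℚ) + i)) (m-u)
      * ff (X 1 - C ((i:ℚ) + u + 1)) (m-u)


section ffLemmas
variable {R S : Type*} [CommRing R] [CommRing S]

lemma ff_hom (f : R →+* S) (a : R) (k : ℕ) : f (ff a k) = ff (f a) k := by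
  simp [ff, map_prod]

lemma ff_succ_left (a : R) (k : ℕ) : ff a (k+1) = a * ff (a - 1) k := by
  rw [ff, Finset.prod_range_succ', ff]
  simp only [Nat.cast_zero, sub_zero, Nat.cast_add, Nat.cast_one]
  rw [mul_comm]
  congr 1
  exact Finset.prod_congr rfl fun j _ => by ring

lemma ff_succ_right (a : R) (k : ℕ) : ff a (k+1) = ff a k * (a - k) := by
  rw [ff, Finset.prod_range_succ, ff]

lemma ff_neg (a : R) (k : ℕ) : ff (-a) k = (-1)^k * ff (a + k - 1) k := by
  have h1 : ff (-a) k = (-1)^k * ∏ j ∈ Finset.range k, (a + j) :=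
    calc ff (-a) k = ∏ j ∈ Finset.range k, (-1) * (a + (j:R)) :=
          by rw [ff]; exact Finset.prod_congr rfl fun j _ => by ring
      _ = (-1)^k * ∏ j ∈ Finset.range k, (a + j) := by
          rw [Finset.prod_mul_distrib, Finset.prod_const, Finset.card_range]
  have h2 : ff (a + k - 1) k = ∏ j ∈ Finset.range k, (a + j) := by
    rw [ff, ← Finset.prod_range_reflect (fun j => a + j)]
    refine Finset.prod_congr rfl fun j hj => ?_
    have hj' := Finset.mem_range.mp hj
    have hc : ((k - 1 - j : ℕ) : R) = (k : R) - 1 - j := by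
      have : k - 1 - j = k - (1 + j) := by omega
      rw [this, Nat.cast_sub (by omega)]
      push_cast
      ring
    simp only [hc]
    ring
  rw [h1, h2]

lemma ff_nat_eq_zero (n k : ℕ) (h : n < k) : ff ((n : ℚ)) k = 0 := by
  apply Finset.prod_eq_zero (Finset.mem_range.mpr h)
  simp

lemma half_add_ne_zero (z : ℤ) : ((z : ℚ) + 1/2) ≠ 0 := by
  intro h
  have h2 : ((2*z + 1 : ℤ) : ℚ) = 0 := by push_cast; linarith
  have := Int.cast_injective (α := ℚ) (h2.trans (Int.cast_zero).symm)
  omega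

lemma ff_half_ne_zero (z : ℤ) (k : ℕ) : ff ((z : ℚ) + 1/2) k ≠ 0 := by
  rw [ff, Finset.prod_ne_zero_iff]
  intro j _
  have : (z : ℚ) + 1/2 - (j : ℚ) = ((z - j : ℤ) : ℚ) + 1/2 := by push_cast; ring
  rw [this]
  exact half_add_ne_zero _

end ffLemmas

lemma ff_arg_simp (c : ℚ) (j : ℕ) :
    (Polynomial.X + Polynomial.C c - (j : Polynomial ℚ)) = Polynomial.X + Polynomial.C (c - j) := by
  rw [← Polynomial.C_eq_natCast, add_sub_assoc, ← Polynomial.C_sub]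

lemma ff_natDegree_le (p : Polynomial ℚ) (hp : p.natDegree ≤ 1) (k : ℕ) :
    (ff p k).natDegree ≤ k := by
  refine le_trans (Polynomial.natDegree_prod_le _ _) ?_
  calc ∑ j ∈ Finset.range k, (p - (j : Polynomial ℚ)).natDegree
      ≤ ∑ _j ∈ Finset.range k, 1 := by
        refine Finset.sum_le_sum fun j _ => ?_
        refine le_trans (Polynomial.natDegree_sub_le _ _) ?_
        simp [hp, Polynomial.natDegree_natCast]
    _ = k := by simp

lemma ff_monic (c : ℚ) (k : ℕ) : (ff (Polynomial.X + Polynomial.C c) k).Monic := by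
  apply Polynomial.monic_prod_of_monic
  intro j _
  rw [ff_arg_simp]
  exact Polynomial.monic_X_add_C _

lemma ff_natDegree_eq (c : ℚ) (k : ℕ) :
    (ff (Polynomial.X + Polynomial.C c) k).natDegree = k := by
  rw [ff, Polynomial.natDegree_prod]
  · rw [Finset.sum_congr rfl (g := fun _ => 1)
      (fun j _ => by rw [ff_arg_simp, Polynomial.natDegree_X_add_C]),
      Finset.sum_const, smul_eq_mul, mul_one, Finset.card_range]
  · intro j _
    rw [ff_arg_simp]
    exact (Polynomial.monic_X_add_C _).ne_zero

lemma altsum (m : ℕ) (p : Polynomial ℚ) (hp : p.natDegree < m) :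
    ∑ u ∈ Finset.range (m+1), (-1:ℚ)^u * (m.choose u : ℚ) * p.eval (u : ℚ) = 0 := by
  induction m generalizing p with
  | zero => omega
  | succ m ih =>
    classical
    set q : Polynomial ℚ := p.comp (Polynomial.X + Polynomial.C 1) - p with hq
    have hqeval : ∀ x : ℚ, q.eval x = p.eval (x + 1) - p.eval x := by
      intro x; simp [hq, Polynomial.eval_comp]
    set A : ℚ := ∑ u ∈ Finset.range (m+1), (-1:ℚ)^u * (m.choose u : ℚ) * p.eval ((u:ℚ)+1) with hA
    set B : ℚ := ∑ u ∈ Finset.range (m+1), (-1:ℚ)^u * (m.choose u : ℚ) * p.eval (u:ℚ) with hB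
    have hqsum : ∑ u ∈ Finset.range (m+1), (-1:ℚ)^u * (m.choose u : ℚ) * q.eval (u:ℚ) = A - B := by
      rw [hA, hB, ← Finset.sum_sub_distrib]
      exact Finset.sum_congr rfl fun u _ => by rw [hqeval]; ring
    have hAB : A = B := by
      by_cases hq0 : q = 0
      · rw [hA, hB]
        refine Finset.sum_congr rfl fun u _ => ?_
        have := hqeval (u : ℚ)
        rw [hq0] at this
        simp only [Polynomial.eval_zero] at this
        rw [show p.eval ((u:ℚ)+1) = p.eval (u:ℚ) by linarith]
      · have hqdeg : q.natDegree < m := by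
          have hpd0 : p.natDegree ≠ 0 := by
            intro h0
            apply hq0
            have hpc := Polynomial.eq_C_of_natDegree_eq_zero h0
            rw [hq, hpc]
            simp
          have hp0 : p ≠ 0 := fun h => hpd0 (by simp [h])
          have hcompdeg : (p.comp (Polynomial.X + Polynomial.C 1)).natDegree = p.natDegree := by
            rw [Polynomial.natDegree_comp, Polynomial.natDegree_X_add_C, mul_one]
          have hcomp0 : p.comp (Polynomial.X + Polynomial.C 1) ≠ 0 := by
            intro h
            rw [h] at hcompdeg
            simp only [Polynomial.natDegree_zero] at hcompdeg
            exact hpd0 hcompdeg.symm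
          have hlc : (p.comp (Polynomial.X + Polynomial.C 1)).leadingCoeff = p.leadingCoeff := by
            rw [Polynomial.leadingCoeff_comp (by rw [Polynomial.natDegree_X_add_C]; omega)]
            rw [(Polynomial.monic_X_add_C (1:ℚ)).leadingCoeff]
            simp
          have hdlt : q.degree < (p.comp (Polynomial.X + Polynomial.C 1)).degree := by
            apply Polynomial.degree_sub_lt
            · rw [Polynomial.degree_eq_natDegree hcomp0, Polynomial.degree_eq_natDegree hp0,
                hcompdeg]
            · exact hcomp0
            · exact hlc
          have := Polynomial.natDegree_lt_natDegree hq0 hdlt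
          omega
        have := ih q hqdeg
        rw [hqsum] at this
        linarith
    have h1 : ∑ u ∈ Finset.range (m+1+1), (-1:ℚ)^u * ((m+1).choose u : ℚ) * p.eval (u:ℚ)
        = (∑ v ∈ Finset.range (m+1), (-1:ℚ)^(v+1) * ((m+1).choose (v+1) : ℚ) * p.eval ((v:ℚ)+1))
          + p.eval 0 := by
      rw [Finset.sum_range_succ']
      simp only [Nat.choose_zero_right, Nat.cast_one, pow_zero, Nat.cast_zero, one_mul, mul_one]
      congr 1
      refine Finset.sum_congr rfl fun v _ => ?_
      push_cast
      ring_nf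
    rw [h1]
    have h2 : ∑ v ∈ Finset.range (m+1), (-1:ℚ)^(v+1) * ((m+1).choose (v+1) : ℚ) * p.eval ((v:ℚ)+1)
        = -A + (∑ v ∈ Finset.range (m+1), (-1:ℚ)^(v+1) * (m.choose (v+1) : ℚ) * p.eval ((v:ℚ)+1)) := by
      rw [hA, ← Finset.sum_neg_distrib, ← Finset.sum_add_distrib]
      refine Finset.sum_congr rfl fun v _ => ?_
      rw [Nat.choose_succ_succ]
      push_cast
      ring
    rw [h2]
    have hBext : ∑ u ∈ Finset.range (m+1+1), (-1:ℚ)^u * (m.choose u : ℚ) * p.eval (u:ℚ) = B := by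
      rw [Finset.sum_range_succ, Nat.choose_succ_self]
      simp [hB]
    have h4 : ∑ u ∈ Finset.range (m+1+1), (-1:ℚ)^u * (m.choose u : ℚ) * p.eval (u:ℚ)
        = (∑ v ∈ Finset.range (m+1), (-1:ℚ)^(v+1) * (m.choose (v+1) : ℚ) * p.eval ((v:ℚ)+1))
          + p.eval 0 := by
      rw [Finset.sum_range_succ']
      simp only [Nat.choose_zero_right, Nat.cast_one, pow_zero, Nat.cast_zero, one_mul, mul_one]
      congr 1
      refine Finset.sum_congr rfl fun v _ => ?_
      push_cast
      ring_nf
    have h3 : ∑ v ∈ Finset.range (m+1), (-1:ℚ)^(v+1) * (m.choose (v+1) : ℚ) * p.eval ((v:ℚ)+1)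
        = B - p.eval 0 := by
      rw [← hBext, h4]
      ring
    rw [h3, hAB]
    ring

lemma ff_hom' {R S F : Type*} [CommRing R] [CommRing S] [FunLike F R S]
    [RingHomClass F R S] (f : F) (a : R) (k : ℕ) : f (ff a k) = ff (f a) k := by
  simp [ff, map_prod]

lemma ff_eval (a : ℚ) (p : Polynomial ℚ) (k : ℕ) :
    (ff p k).eval a = ff (p.eval a) k := by
  have := ff_hom' (Polynomial.evalRingHom a) p k
  simpa using this

noncomputable def phi (m : ℕ) : MvPolynomial (Fin 2) ℚ →ₐ[ℚ] Polynomial ℚ :=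
  MvPolynomial.aeval ![Polynomial.X, -Polynomial.X - Polynomial.C (m:ℚ)]

noncomputable def theta : Polynomial ℚ →ₐ[ℚ] MvPolynomial (Fin 2) ℚ :=
  Polynomial.aeval (X 0)

lemma sub_theta_mem (m : ℕ) (p : MvPolynomial (Fin 2) ℚ) :
    p - theta (phi m p) ∈ Ideal.span {X 0 + X 1 + C (m:ℚ)} := by
  induction p using MvPolynomial.induction_on with
  | C a =>
      have h1 : phi m (C a) = Polynomial.C a := by
        simp [phi, MvPolynomial.algebraMap_eq]
      have h2 : theta (Polynomial.C a) = C a := by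
        simp [theta, MvPolynomial.algebraMap_eq]
      rw [h1, h2, sub_self]
      exact Ideal.zero_mem _
  | add p q hp hq =>
      rw [map_add, map_add,
        show p + q - (theta (phi m p) + theta (phi m q))
          = (p - theta (phi m p)) + (q - theta (phi m q)) from by ring]
      exact Ideal.add_mem _ hp hq
  | mul_X p n hp =>
      rw [map_mul, map_mul,
        show p * X n - theta (phi m p) * theta (phi m (X n))
          = (p - theta (phi m p)) * X n
            + theta (phi m p) * (X n - theta (phi m (X n))) from by ring]
      refine Ideal.add_mem _ (Ideal.mul_mem_right _ _ hp) (Ideal.mul_mem_left _ _ ?_)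
      fin_cases n
      · show X 0 - theta (phi m (X 0)) ∈ _
        have : phi m (X 0) = Polynomial.X := by simp [phi]
        rw [this, show theta Polynomial.X = X 0 from by simp [theta], sub_self]
        exact Ideal.zero_mem _
      · show X 1 - theta (phi m (X 1)) ∈ _
        have h1 : phi m (X 1) = -Polynomial.X - Polynomial.C (m:ℚ) := by simp [phi]
        have h2 : theta (-Polynomial.X - Polynomial.C (m:ℚ)) = -(X 0) - C (m:ℚ) := by
          simp [theta, MvPolynomial.algebraMap_eq]
        rw [h1, h2, show (X 1 : MvPolynomial (Fin 2) ℚ) - (-(X 0) - C (m:ℚ))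
          = X 0 + X 1 + C (m:ℚ) from by ring]
        exact Ideal.subset_span rfl

lemma phi_F2 (i m : ℕ) : phi m (F2 i m) =
    ∑ u ∈ Finset.range (m+1),
      Polynomial.C ((m.choose u : ℚ) * (-1)^u * (m.factorial : ℚ) / ff ((m:ℚ) + i + u + 1/2) (m+1))
        * ff (Polynomial.X + Polynomial.C ((m:ℚ) + i + u)) (2*m+2*i+2*u+1)
        * ff (-Polynomial.X - Polynomial.C (m:ℚ) + Polynomial.C ((m:ℚ) + i)) (m-u)
        * ff (-Polynomial.X - Polynomial.C (m:ℚ) - Polynomial.C ((i:ℚ) + u + 1)) (m-u) := by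
  rw [F2, map_sum]
  refine Finset.sum_congr rfl fun u _ => ?_
  rw [map_mul, map_mul, map_mul, ff_hom' (phi m), ff_hom' (phi m), ff_hom' (phi m)]
  rw [show phi m (C ((m.choose u : ℚ) * (-1)^u * (m.factorial : ℚ) / ff ((m:ℚ) + i + u + 1/2) (m+1)))
      = Polynomial.C ((m.choose u : ℚ) * (-1)^u * (m.factorial : ℚ) / ff ((m:ℚ) + i + u + 1/2) (m+1))
    from by simp [phi, MvPolynomial.algebraMap_eq]]
  rw [map_add, map_add, map_sub]
  simp [phi, MvPolynomial.algebraMap_eq]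

lemma eval_phi_F2 (i m : ℕ) (a : ℚ) : (phi m (F2 i m)).eval a =
    ∑ u ∈ Finset.range (m+1),
      ((m.choose u : ℚ) * (-1)^u * (m.factorial : ℚ) / ff ((m:ℚ) + i + u + 1/2) (m+1))
        * ff (a + ((m:ℚ) + i + u)) (2*m+2*i+2*u+1)
        * ff (-a - (m:ℚ) + ((m:ℚ) + i)) (m-u)
        * ff (-a - (m:ℚ) - ((i:ℚ) + u + 1)) (m-u) := by
  rw [phi_F2, Polynomial.eval_finset_sum]
  refine Finset.sum_congr rfl fun u _ => ?_
  simp [ff_eval]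

noncomputable def NN (i m rr u : ℕ) : ℚ :=
  ff ((-(rr:ℚ)-1/2) + ((m:ℚ) + i + u)) (2*m+2*i+2*u+1)
    * ff (-(-(rr:ℚ)-1/2) - (m:ℚ) + ((m:ℚ) + i)) (m-u)
    * ff (-(-(rr:ℚ)-1/2) - (m:ℚ) - ((i:ℚ) + u + 1)) (m-u)

noncomputable def DD (i m u : ℕ) : ℚ := ff ((m:ℚ) + i + u + 1/2) (m+1)

noncomputable def gg (i m rr u : ℕ) : ℚ :=
  ff ((u:ℚ) + i - 1/2) (m-rr-1) * ff ((u:ℚ) + m + i + rr + 1/2) rr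

lemma ff_peel2 (x : ℚ) (k : ℕ) : ff (x+1) (k+2) = (x+1) * (x - k) * ff x k := by
  have h1 : ff (x+1) ((k+1)+1) = (x+1) * ff x (k+1) := by
    rw [ff_succ_left]; ring_nf
  rw [show k+2 = (k+1)+1 from rfl, h1, ff_succ_right]
  ring

set_option maxHeartbeats 4000000 in
set_option maxRecDepth 4000 in
lemma keylem (i m rr : ℕ) (hrr : rr < m) : ∀ u, u ≤ m →
    NN i m rr u * (DD i m 0 * gg i m rr 0) = NN i m rr 0 * (DD i m u * gg i m rr u) := by
  intro u
  induction u with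
  | zero => intro _; ring
  | succ u ih =>
    intro hu1
    have hum : u < m := hu1
    have IH := ih (Nat.le_of_lt hum)
    simp only [NN, DD, gg] at IH ⊢
    push_cast
    ring_nf
    ring_nf at IH
    rw [show (-1/2 + (rr:ℚ) - m - i - u) = -1/2 + ((rr:ℚ) - m) + (-(i:ℚ) - u) by ring,
      show (-1/2 + (rr:ℚ) - m - i) = -1/2 + (rr:ℚ) + (-(m:ℚ) - i) by ring] at IH
    rw [show (-3/2 + (rr:ℚ) - m - i - u) = -3/2 + ((rr:ℚ) - m) + (-(i:ℚ) - u) by ring,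
      show (-1/2 + (rr:ℚ) - m - i) = -1/2 + (rr:ℚ) + (-(m:ℚ) - i) by ring]
    -- abbreviations
    set F1 := ff (-1/2 - (rr:ℚ) + m + i + u) (1+m*2+i*2+u*2) with hF1
    set F1' := ff (1/2 - (rr:ℚ) + m + i + u) (3+m*2+i*2+u*2) with hF1'
    set Fb := ff (1/2 + (rr:ℚ) + i) (m-u) with hFb
    set Fb' := ff (1/2 + (rr:ℚ) + i) (m-(1+u)) with hFb'
    set Fc := ff (-1/2 + ((rr:ℚ) - m) + (-(i:ℚ) - u)) (m-u) with hFc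
    set Fc' := ff (-3/2 + ((rr:ℚ) - m) + (-(i:ℚ) - u)) (m-(1+u)) with hFc'
    set FA := ff (1/2 + (m:ℚ) + i + u) (1+m) with hFA
    set FA' := ff (3/2 + (m:ℚ) + i + u) (1+m) with hFA'
    set FB1 := ff (-1/2 + (i:ℚ) + u) (m-rr-1) with hFB1
    set FB1' := ff (1/2 + (i:ℚ) + u) (m-rr-1) with hFB1'
    set FB2 := ff (1/2 + (rr:ℚ) + m + i + u) rr with hFB2
    set FB2' := ff (3/2 + (rr:ℚ) + m + i + u) rr with hFB2'
    set W1 := ff (1/2 + (m:ℚ) + i) (1+m) with hW1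
    set W2 := ff (-1/2 + (i:ℚ)) (m-rr-1) with hW2
    set W3 := ff (1/2 + (rr:ℚ) + m + i) rr with hW3
    set Z1 := ff (-1/2 - (rr:ℚ) + m + i) (1+m*2+i*2) with hZ1
    set Zb := ff (1/2 + (rr:ℚ) + i) (m-0) with hZb
    set Zc := ff (-1/2 + (rr:ℚ) + (-(m:ℚ) - i)) (m-0) with hZc
    -- cast facts
    have hc1 : ((1+m*2+i*2+u*2 : ℕ):ℚ) = 1 + 2*m + 2*i + 2*u := by push_cast; ring
    have hc2 : ((m-(1+u) : ℕ):ℚ) = (m:ℚ) - 1 - u := by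
      rw [Nat.cast_sub (by omega)]; push_cast; ring
    have hc3 : ((1+m : ℕ):ℚ) = 1 + (m:ℚ) := by push_cast; ring
    have hc4 : ((m-rr-1 : ℕ):ℚ) = (m:ℚ) - rr - 1 := by
      rw [show m-rr-1 = m-(rr+1) by omega, Nat.cast_sub (by omega)]; push_cast; ring
    -- peeled relations (compact)
    have E1 : F1' = ((1/2 - (rr:ℚ) + m + i + u) * (-3/2 - (rr:ℚ) - m - i - u)) * F1 := by
      rw [hF1', hF1,
        show (1/2 - (rr:ℚ) + m + i + u) = (-1/2 - (rr:ℚ) + m + i + u) + 1 from by ring,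
        show 3+m*2+i*2+u*2 = (1+m*2+i*2+u*2)+2 from by ring, ff_peel2, hc1]
      ring
    have E2 : Fb = Fb' * (3/2 + (rr:ℚ) + i + u - m) := by
      rw [hFb, hFb', show m-u = (m-(1+u))+1 from by omega, ff_succ_right, hc2]
      ring
    have E3 : Fc = (-1/2 + ((rr:ℚ) - m) + (-(i:ℚ) - u)) * Fc' := by
      rw [hFc, hFc', show m-u = (m-(1+u))+1 from by omega, ff_succ_left,
        show (-1/2 + ((rr:ℚ) - m) + (-(i:ℚ) - u)) - 1 = -3/2 + ((rr:ℚ) - m) + (-(i:ℚ) - u) from by ring]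
    have E4 : FA' * (1/2 + (i:ℚ) + u) = (3/2 + (m:ℚ) + i + u) * FA := by
      rw [hFA', hFA]
      have ha := ff_succ_left (1/2 + (m:ℚ) + i + u + 1) (1+m)
      have hb := ff_succ_right (1/2 + (m:ℚ) + i + u + 1) (1+m)
      rw [show (1/2 + (m:ℚ) + i + u + 1) - 1 = 1/2 + (m:ℚ) + i + u from by ring] at ha
      rw [hc3] at hb
      rw [show (3/2 + (m:ℚ) + i + u) = 1/2 + (m:ℚ) + i + u + 1 from by ring]
      have := ha.symm.trans hb
      -- this : (x+1) * ff x (1+m) = ff (x+1) (1+m) * (x+1 - (1+m))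
      linear_combination -this
    have E5 : FB1' * (3/2 + (i:ℚ) + u + rr - m) = (1/2 + (i:ℚ) + u) * FB1 := by
      rw [hFB1', hFB1]
      have ha := ff_succ_left (-1/2 + (i:ℚ) + u + 1) (m-rr-1)
      have hb := ff_succ_right (-1/2 + (i:ℚ) + u + 1) (m-rr-1)
      rw [show (-1/2 + (i:ℚ) + u + 1) - 1 = -1/2 + (i:ℚ) + u from by ring] at ha
      rw [hc4] at hb
      rw [show (1/2 + (i:ℚ) + u) = -1/2 + (i:ℚ) + u + 1 from by ring]
      have := ha.symm.trans hb
      linear_combination (-1/2 + (i:ℚ) + u + 1) * ff (-1/2 + (i:ℚ) + u) (m-rr-1) - this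
    have E6 : FB2' * (3/2 + (m:ℚ) + i + u) = (3/2 + (rr:ℚ) + m + i + u) * FB2 := by
      rw [hFB2', hFB2]
      have ha := ff_succ_left (1/2 + (rr:ℚ) + m + i + u + 1) rr
      have hb := ff_succ_right (1/2 + (rr:ℚ) + m + i + u + 1) rr
      rw [show (1/2 + (rr:ℚ) + m + i + u + 1) - 1 = 1/2 + (rr:ℚ) + m + i + u from by ring] at ha
      rw [show (3/2 + (rr:ℚ) + m + i + u) = 1/2 + (rr:ℚ) + m + i + u + 1 from by ring]
      have := ha.symm.trans hb
      linear_combination -this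
    -- nonzero scalars
    have hq1 : ((3:ℚ)/2 + rr + i + u - m) ≠ 0 := by
      have h : ((3:ℚ)/2 + rr + i + u - m) = ((rr + i + u + 1 - m : ℤ):ℚ) + 1/2 := by push_cast; ring
      rw [h]; exact half_add_ne_zero _
    have hcc : ((-1:ℚ)/2 + ((rr:ℚ) - m) + (-(i:ℚ) - u)) ≠ 0 := by
      have h : ((-1:ℚ)/2 + ((rr:ℚ) - m) + (-(i:ℚ) - u)) = ((rr - m - i - u - 1 : ℤ):ℚ) + 1/2 := by
        push_cast; ring
      rw [h]; exact half_add_ne_zero _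
    have hd1 : ((1:ℚ)/2 + i + u) ≠ 0 := by
      have h : ((1:ℚ)/2 + i + u) = ((i + u : ℤ):ℚ) + 1/2 := by push_cast; ring
      rw [h]; exact half_add_ne_zero _
    have hs1 : ((3:ℚ)/2 + i + u + rr - m) ≠ 0 := by
      have h : ((3:ℚ)/2 + i + u + rr - m) = ((i + u + rr + 1 - m : ℤ):ℚ) + 1/2 := by push_cast; ring
      rw [h]; exact half_add_ne_zero _
    have hs2 : ((3:ℚ)/2 + m + i + u) ≠ 0 := by
      have h : ((3:ℚ)/2 + m + i + u) = ((m + i + u + 1 : ℤ):ℚ) + 1/2 := by push_cast; ring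
      rw [h]; exact half_add_ne_zero _
    have G1 : F1' * Fb' * Fc' * ((3/2 + (rr:ℚ) + i + u - m) * (-1/2 + ((rr:ℚ) - m) + (-(i:ℚ) - u)))
        = ((1/2 - (rr:ℚ) + m + i + u) * (-3/2 - (rr:ℚ) - m - i - u)) * (F1 * Fb * Fc) := by
      linear_combination (Fb' * Fc' * ((3/2 + (rr:ℚ) + i + u - m) * (-1/2 + ((rr:ℚ) - m) + (-(i:ℚ) - u)))) * E1
        + (-((1/2 - (rr:ℚ) + m + i + u) * (-3/2 - (rr:ℚ) - m - i - u)) * F1 * Fc) * E2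
        + (-((1/2 - (rr:ℚ) + m + i + u) * (-3/2 - (rr:ℚ) - m - i - u)) * F1 * Fb' * (3/2 + (rr:ℚ) + i + u - m)) * E3
    have G2 : (FA' * FB1' * FB2') * ((1/2 + (i:ℚ) + u) * (3/2 + (i:ℚ) + u + rr - m) * (3/2 + (m:ℚ) + i + u))
        = ((3/2 + (m:ℚ) + i + u) * (1/2 + (i:ℚ) + u) * (3/2 + (rr:ℚ) + m + i + u)) * (FA * FB1 * FB2) := by
      linear_combination (FB1' * FB2' * ((3/2 + (i:ℚ) + u + rr - m) * (3/2 + (m:ℚ) + i + u))) * E4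
        + ((3/2 + (m:ℚ) + i + u) * FA * FB2' * (3/2 + (m:ℚ) + i + u)) * E5
        + ((3/2 + (m:ℚ) + i + u) * (1/2 + (i:ℚ) + u) * FA * FB1) * E6
    refine mul_right_cancel₀ (b := (3/2 + (rr:ℚ) + i + u - m) * (-1/2 + ((rr:ℚ) - m) + (-(i:ℚ) - u))
      * (1/2 + (i:ℚ) + u) * (3/2 + (i:ℚ) + u + rr - m) * (3/2 + (m:ℚ) + i + u)) ?_ ?_
    · exact mul_ne_zero (mul_ne_zero (mul_ne_zero (mul_ne_zero hq1 hcc) hd1) hs1) hs2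
    · linear_combination
        (W1 * W2 * W3 * ((1/2 + (i:ℚ) + u) * (3/2 + (i:ℚ) + u + rr - m) * (3/2 + (m:ℚ) + i + u))) * G1
        + (((1/2 - (rr:ℚ) + m + i + u) * (-3/2 - (rr:ℚ) - m - i - u)) * ((1/2 + (i:ℚ) + u) * (3/2 + (i:ℚ) + u + rr - m) * (3/2 + (m:ℚ) + i + u))) * IH
        + (-(Z1 * Zb * Zc) * ((3/2 + (rr:ℚ) + i + u - m) * (-1/2 + ((rr:ℚ) - m) + (-(i:ℚ) - u)))) * G2

lemma int_vanish (i m j : ℕ) (hj : j < 3*m+2*i+1) :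
    (phi m (F2 i m)).eval ((j:ℚ) - 2*m - i) = 0 := by
  rw [eval_phi_F2]
  apply Finset.sum_eq_zero
  intro u hu
  have hum : u ≤ m := by have := Finset.mem_range.mp hu; omega
  by_cases hcase : m ≤ j + u
  · rw [show (j:ℚ) - 2*m - i + ((m:ℚ) + i + u) = ((j+u-m : ℕ):ℚ) from by
      rw [Nat.cast_sub hcase]; push_cast; ring]
    rw [ff_nat_eq_zero (j+u-m) (2*m+2*i+2*u+1) (by omega)]
    ring
  · rw [show -((j:ℚ) - 2*m - i) - (m:ℚ) - ((i:ℚ) + u + 1) = ((m-(j+u+1) : ℕ):ℚ) from by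
      rw [Nat.cast_sub (by omega)]; push_cast; ring]
    rw [ff_nat_eq_zero (m-(j+u+1)) (m-u) (by omega)]
    ring

lemma half_vanish (i m rr : ℕ) (hrr : rr < m) :
    (phi m (F2 i m)).eval (-(rr:ℚ) - 1/2) = 0 := by
  rw [eval_phi_F2]
  have hDne : ∀ u : ℕ, DD i m u ≠ 0 := by
    intro u
    rw [DD, show (m:ℚ) + i + u + 1/2 = ((m+i+u : ℤ):ℚ) + 1/2 from by push_cast; ring]
    exact ff_half_ne_zero _ _
  have hg0 : gg i m rr 0 ≠ 0 := by
    rw [gg]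
    apply mul_ne_zero
    · rw [show ((0:ℕ):ℚ) + i - 1/2 = (((i:ℤ) - 1 : ℤ):ℚ) + 1/2 from by push_cast; ring]
      exact ff_half_ne_zero _ _
    · rw [show ((0:ℕ):ℚ) + m + i + rr + 1/2 = ((m+i+rr : ℤ):ℚ) + 1/2 from by push_cast; ring]
      exact ff_half_ne_zero _ _
  set Gp : Polynomial ℚ := ff (Polynomial.X + Polynomial.C ((i:ℚ) - 1/2)) (m-rr-1)
      * ff (Polynomial.X + Polynomial.C ((m:ℚ) + i + rr + 1/2)) rr with hGp
  have hgg : ∀ u : ℕ, Polynomial.eval (u:ℚ) Gp = gg i m rr u := by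
    intro u
    rw [hGp, gg, Polynomial.eval_mul, ff_eval, ff_eval]
    simp only [Polynomial.eval_add, Polynomial.eval_X, Polynomial.eval_C]
    rw [show (u:ℚ) + ((i:ℚ) - 1/2) = (u:ℚ) + i - 1/2 from by ring,
      show (u:ℚ) + ((m:ℚ) + i + rr + 1/2) = (u:ℚ) + m + i + rr + 1/2 from by ring]
  have hdeg : Gp.natDegree < m := by
    have h1 := ff_natDegree_le (Polynomial.X + Polynomial.C ((i:ℚ) - 1/2))
      (le_of_eq (Polynomial.natDegree_X_add_C _)) (m-rr-1)
    have h2 := ff_natDegree_le (Polynomial.X + Polynomial.C ((m:ℚ) + i + rr + 1/2))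
      (le_of_eq (Polynomial.natDegree_X_add_C _)) rr
    have := Polynomial.natDegree_mul_le (p := ff (Polynomial.X + Polynomial.C ((i:ℚ) - 1/2)) (m-rr-1))
      (q := ff (Polynomial.X + Polynomial.C ((m:ℚ) + i + rr + 1/2)) rr)
    rw [hGp]
    omega
  have halt := altsum m Gp hdeg
  have hterm : ∀ u ∈ Finset.range (m+1),
      (m.choose u : ℚ) * (-1)^u * (m.factorial : ℚ) / ff ((m:ℚ) + i + u + 1/2) (m+1)
        * ff (-(rr:ℚ) - 1/2 + ((m:ℚ) + i + u)) (2*m+2*i+2*u+1)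
        * ff (-(-(rr:ℚ) - 1/2) - (m:ℚ) + ((m:ℚ) + i)) (m-u)
        * ff (-(-(rr:ℚ) - 1/2) - (m:ℚ) - ((i:ℚ) + u + 1)) (m-u)
      = ((m.factorial : ℚ) * NN i m rr 0 / (DD i m 0 * gg i m rr 0))
          * ((-1:ℚ)^u * (m.choose u : ℚ) * Polynomial.eval (u:ℚ) Gp) := by
    intro u hu
    have hum : u ≤ m := by have := Finset.mem_range.mp hu; omega
    have key := keylem i m rr hrr u hum
    rw [hgg u]
    rw [show (m.choose u : ℚ) * (-1)^u * (m.factorial : ℚ) / ff ((m:ℚ) + i + u + 1/2) (m+1)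
        * ff (-(rr:ℚ) - 1/2 + ((m:ℚ) + i + u)) (2*m+2*i+2*u+1)
        * ff (-(-(rr:ℚ) - 1/2) - (m:ℚ) + ((m:ℚ) + i)) (m-u)
        * ff (-(-(rr:ℚ) - 1/2) - (m:ℚ) - ((i:ℚ) + u + 1)) (m-u)
      = ((m.choose u : ℚ) * (-1)^u * (m.factorial : ℚ) / DD i m u) * NN i m rr u from by
        rw [NN, DD]; ring]
    rw [div_mul_eq_mul_div, div_mul_eq_mul_div,
      div_eq_div_iff (hDne u) (mul_ne_zero (hDne 0) hg0)]
    linear_combination ((m.choose u : ℚ) * (-1)^u * (m.factorial : ℚ)) * key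
  rw [Finset.sum_congr rfl hterm, ← Finset.mul_sum, halt, mul_zero]


theorem stmt8 (i m : ℕ) :
    ∃ A : ℚ,
      F2 i m - C A * ff (X 0 + C (2*(m:ℚ) + i)) (3*m+2*i+1) * ff (X 0 + C ((m:ℚ) - 1/2)) m
          ∈ Ideal.span {X 0 + X 1 + C (m:ℚ)} ∧
      F2 i m + C A * ff (X 1 + C (2*(m:ℚ) + i)) (3*m+2*i+1) * ff (X 1 + C ((m:ℚ) - 1/2)) m
          ∈ Ideal.span {(X 0 + X 1 + C (m:ℚ) : MvPolynomial (Fin 2) ℚ)} := by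
  classical
  set P : Polynomial ℚ := phi m (F2 i m) with hP
  set G : Polynomial ℚ := ff (Polynomial.X + Polynomial.C (2*(m:ℚ) + i)) (3*m+2*i+1)
      * ff (Polynomial.X + Polynomial.C ((m:ℚ) - 1/2)) m with hGdef
  set A : ℚ := P.coeff (4*m+2*i+1) with hAdef
  have hGmon : G.Monic := (ff_monic _ _).mul (ff_monic _ _)
  have hGdeg : G.natDegree = 4*m+2*i+1 := by
    rw [hGdef, Polynomial.Monic.natDegree_mul (ff_monic _ _) (ff_monic _ _),
      ff_natDegree_eq, ff_natDegree_eq]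
    omega
  -- degree bound for P
  have hPdeg : P.natDegree ≤ 4*m+2*i+1 := by
    rw [hP, phi_F2]
    apply Polynomial.natDegree_sum_le_of_forall_le
    intro u hu
    have hum : u ≤ m := by have := Finset.mem_range.mp hu; omega
    have hb1 : (ff (Polynomial.X + Polynomial.C ((m:ℚ) + i + u)) (2*m+2*i+2*u+1)).natDegree
        ≤ 2*m+2*i+2*u+1 :=
      ff_natDegree_le _ (le_of_eq (Polynomial.natDegree_X_add_C _)) _
    have harg2 : (-Polynomial.X - Polynomial.C (m:ℚ) + Polynomial.C ((m:ℚ) + (i:ℚ))).natDegree ≤ 1 := by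
      refine le_trans (Polynomial.natDegree_add_le _ _) ?_
      refine max_le (le_trans (Polynomial.natDegree_sub_le _ _) ?_)
        (by rw [Polynomial.natDegree_C]; omega)
      exact max_le (by simp [Polynomial.natDegree_neg])
        (by rw [Polynomial.natDegree_C]; omega)
    have harg3 : (-Polynomial.X - Polynomial.C (m:ℚ) - Polynomial.C ((i:ℚ) + (u:ℚ) + 1)).natDegree ≤ 1 := by
      refine le_trans (Polynomial.natDegree_sub_le _ _) ?_
      refine max_le (le_trans (Polynomial.natDegree_sub_le _ _) ?_)
        (by rw [Polynomial.natDegree_C]; omega)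
      exact max_le (by simp [Polynomial.natDegree_neg])
        (by rw [Polynomial.natDegree_C]; omega)
    have hb2 := ff_natDegree_le _ harg2 (m-u)
    have hb3 := ff_natDegree_le _ harg3 (m-u)
    refine le_trans (Polynomial.natDegree_mul_le) ?_
    refine le_trans (add_le_add (le_trans (Polynomial.natDegree_mul_le)
      (add_le_add (le_trans (Polynomial.natDegree_mul_le)
        (add_le_add (le_of_eq (Polynomial.natDegree_C _)) hb1)) hb2)) hb3) ?_
    omega
  -- roots
  set S : Finset ℚ := ((Finset.range (3*m+2*i+1)).image (fun j : ℕ => (j:ℚ) - 2*m - i))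
      ∪ ((Finset.range m).image (fun rr : ℕ => -(rr:ℚ) - 1/2)) with hS
  have hinj1 : Set.InjOn (fun j : ℕ => (j:ℚ) - 2*m - i) (Finset.range (3*m+2*i+1)) := by
    intro a _ b _ h
    simp only at h
    exact Nat.cast_inj.mp (show ((a:ℚ)) = b by linarith)
  have hinj2 : Set.InjOn (fun rr : ℕ => -(rr:ℚ) - 1/2) (Finset.range m) := by
    intro a _ b _ h
    simp only at h
    exact Nat.cast_inj.mp (show ((a:ℚ)) = b by linarith)
  have hdisj : Disjoint ((Finset.range (3*m+2*i+1)).image (fun j : ℕ => (j:ℚ) - 2*m - i))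
      ((Finset.range m).image (fun rr : ℕ => -(rr:ℚ) - 1/2)) := by
    rw [Finset.disjoint_left]
    intro x hx1 hx2
    obtain ⟨j, _, rfl⟩ := Finset.mem_image.mp hx1
    obtain ⟨rr, _, heq⟩ := Finset.mem_image.mp hx2
    have h2 : ((2*rr + 2*j + 1 : ℕ):ℚ) = ((4*m + 2*i : ℕ):ℚ) := by push_cast; linarith
    have := Nat.cast_inj.mp h2
    omega
  have hcard : S.card = 4*m+2*i+1 := by
    rw [hS, Finset.card_union_of_disjoint hdisj, Finset.card_image_of_injOn hinj1,
      Finset.card_image_of_injOn hinj2, Finset.card_range, Finset.card_range]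
    omega
  have hevals : ∀ s ∈ S, (P - Polynomial.C A * G).eval s = 0 := by
    intro s hs
    rw [Polynomial.eval_sub, Polynomial.eval_mul, Polynomial.eval_C]
    rcases Finset.mem_union.mp hs with h | h
    · obtain ⟨j, hj, rfl⟩ := Finset.mem_image.mp h
      have hj' := Finset.mem_range.mp hj
      have hPz : P.eval ((j:ℚ) - 2*m - i) = 0 := by
        rw [hP]; exact int_vanish i m j hj'
      have hGz : G.eval ((j:ℚ) - 2*m - i) = 0 := by
        rw [hGdef, Polynomial.eval_mul, ff_eval]
        simp only [Polynomial.eval_add, Polynomial.eval_X, Polynomial.eval_C]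
        rw [show (j:ℚ) - 2*m - i + (2*(m:ℚ) + i) = ((j:ℕ):ℚ) from by push_cast; ring]
        rw [ff_nat_eq_zero j (3*m+2*i+1) hj']
        ring
      rw [hPz, hGz, mul_zero, sub_zero]
    · obtain ⟨rr, hrr, rfl⟩ := Finset.mem_image.mp h
      have hrr' := Finset.mem_range.mp hrr
      have hPz : P.eval (-(rr:ℚ) - 1/2) = 0 := by
        rw [hP]; exact half_vanish i m rr hrr'
      have hGz : G.eval (-(rr:ℚ) - 1/2) = 0 := by
        rw [hGdef, Polynomial.eval_mul, ff_eval, ff_eval]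
        simp only [Polynomial.eval_add, Polynomial.eval_X, Polynomial.eval_C]
        rw [show -(rr:ℚ) - 1/2 + ((m:ℚ) - 1/2) = ((m - (rr+1) : ℕ):ℚ) from by
          rw [Nat.cast_sub (by omega)]; push_cast; ring]
        rw [ff_nat_eq_zero (m-(rr+1)) m (by omega)]
        ring
      rw [hPz, hGz, mul_zero, sub_zero]
  have hDcoeff : (P - Polynomial.C A * G).coeff (4*m+2*i+1) = 0 := by
    rw [Polynomial.coeff_sub, Polynomial.coeff_C_mul]
    have hG1 : G.coeff (4*m+2*i+1) = 1 := by
      rw [← hGdeg]; exact hGmon.coeff_natDegree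
    rw [hG1, mul_one, ← hAdef, sub_self]
  have hDdeg : (P - Polynomial.C A * G).natDegree ≤ 4*m+2*i+1 := by
    refine le_trans (Polynomial.natDegree_sub_le _ _) ?_
    refine max_le hPdeg (le_trans (Polynomial.natDegree_C_mul_le _ _) (le_of_eq hGdeg))
  have hD0 : P - Polynomial.C A * G = 0 := by
    by_cases hD : P - Polynomial.C A * G = 0
    · exact hD
    · refine Polynomial.eq_zero_of_natDegree_lt_card_of_eval_eq_zero' _ S hevals ?_
      rw [hcard]
      rcases lt_or_eq_of_le hDdeg with hlt | heq
      · exact hlt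
      · exfalso
        apply hD
        apply Polynomial.leadingCoeff_eq_zero.mp
        rw [Polynomial.leadingCoeff, heq, hDcoeff]
  have hPG : P = Polynomial.C A * G := sub_eq_zero.mp hD0
  have hCA : phi m (C A) = Polynomial.C A := by
    simp [phi, MvPolynomial.algebraMap_eq]
  refine ⟨A, ?_, ?_⟩
  · have hphi : phi m (F2 i m - C A * ff (X 0 + C (2*(m:ℚ) + i)) (3*m+2*i+1)
        * ff (X 0 + C ((m:ℚ) - 1/2)) m) = 0 := by
      rw [map_sub, map_mul, map_mul, ff_hom' (phi m), ff_hom' (phi m), hCA]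
      rw [show phi m (X 0 + C (2*(m:ℚ) + i)) = Polynomial.X + Polynomial.C (2*(m:ℚ) + i) from by
        simp [phi, MvPolynomial.algebraMap_eq]]
      rw [show phi m (X 0 + C ((m:ℚ) - 1/2)) = Polynomial.X + Polynomial.C ((m:ℚ) - 1/2) from by
        simp [phi, MvPolynomial.algebraMap_eq]]
      rw [← hP, hPG, hGdef]
      ring
    have hmem := sub_theta_mem m (F2 i m - C A * ff (X 0 + C (2*(m:ℚ) + i)) (3*m+2*i+1)
        * ff (X 0 + C ((m:ℚ) - 1/2)) m)
    rw [hphi, map_zero, sub_zero] at hmem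
    exact hmem
  · have hphi : phi m (F2 i m + C A * ff (X 1 + C (2*(m:ℚ) + i)) (3*m+2*i+1)
        * ff (X 1 + C ((m:ℚ) - 1/2)) m) = 0 := by
      rw [map_add, map_mul, map_mul, ff_hom' (phi m), ff_hom' (phi m), hCA]
      rw [show phi m (X 1 + C (2*(m:ℚ) + i))
          = -Polynomial.X - Polynomial.C (m:ℚ) + Polynomial.C (2*(m:ℚ) + i) from by
        simp [phi, MvPolynomial.algebraMap_eq]]
      rw [show phi m (X 1 + C ((m:ℚ) - 1/2))
          = -Polynomial.X - Polynomial.C (m:ℚ) + Polynomial.C ((m:ℚ) - 1/2) from by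
        simp [phi, MvPolynomial.algebraMap_eq]]
      have r1 : ff (-Polynomial.X - Polynomial.C (m:ℚ) + Polynomial.C (2*(m:ℚ) + i)) (3*m+2*i+1)
          = (-1)^(3*m+2*i+1) * ff (Polynomial.X + Polynomial.C (2*(m:ℚ) + i)) (3*m+2*i+1) := by
        rw [show -Polynomial.X - Polynomial.C (m:ℚ) + Polynomial.C (2*(m:ℚ) + i)
            = -(Polynomial.X - Polynomial.C ((m:ℚ) + (i:ℚ))) from by
          rw [show Polynomial.C (2*(m:ℚ) + i) = Polynomial.C (m:ℚ) + Polynomial.C ((m:ℚ) + (i:ℚ))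
            from by rw [← map_add]; ring_nf]
          ring]
        rw [ff_neg]
        congr 1
        simp only [map_add, map_sub, map_mul, map_ofNat, Polynomial.C_eq_natCast]
        push_cast
        ring
      have r2 : ff (-Polynomial.X - Polynomial.C (m:ℚ) + Polynomial.C ((m:ℚ) - 1/2)) m
          = (-1)^m * ff (Polynomial.X + Polynomial.C ((m:ℚ) - 1/2)) m := by
        rw [show -Polynomial.X - Polynomial.C (m:ℚ) + Polynomial.C ((m:ℚ) - 1/2)
            = -(Polynomial.X + Polynomial.C (1/2 : ℚ)) from by
          rw [show Polynomial.C ((m:ℚ) - 1/2) = Polynomial.C (m:ℚ) - Polynomial.C (1/2 : ℚ)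
            from by rw [← map_sub]]
          ring]
        rw [ff_neg]
        congr 1
        congr 1
        have fact1 : Polynomial.C ((m:ℚ) - 1/2) + Polynomial.C (1/2 : ℚ) = ((m : Polynomial ℚ)) := by
          rw [← map_add, show (m:ℚ) - 1/2 + 1/2 = ((m:ℕ):ℚ) from by ring]
          exact Polynomial.C_eq_natCast m
        have fact2 : Polynomial.C (1/2 : ℚ) + Polynomial.C (1/2 : ℚ) = (1 : Polynomial ℚ) := by
          rw [← map_add]
          norm_num
        linear_combination (-1 : Polynomial ℚ) * fact1 + fact2
      rw [r1, r2, ← hP, hPG, hGdef]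
      have hsign : ((-1 : Polynomial ℚ))^(3*m+2*i+1) * (-1)^m = -1 := by
        rw [← pow_add, show 3*m+2*i+1+m = 2*(2*m+i)+1 from by ring, pow_succ, pow_mul]
        simp
      linear_combination (Polynomial.C A
        * ff (Polynomial.X + Polynomial.C (2*(m:ℚ) + i)) (3*m+2*i+1)
        * ff (Polynomial.X + Polynomial.C ((m:ℚ) - 1/2)) m) * hsign
    have hmem := sub_theta_mem m (F2 i m + C A * ff (X 1 + C (2*(m:ℚ) + i)) (3*m+2*i+1)
        * ff (X 1 + C ((m:ℚ) - 1/2)) m)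
    rw [hphi, map_zero, sub_zero] at hmem
    exact hmem
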